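/- With the trace maps and pairing as in the context, the pairing on 𝔥 is invariant for the insertion product: (x·y, z) = (x, y·z) for all x, y, z ∈ 𝔥; moreover (x·y, z) equals the trilinear form A(x,y,z) which is totally symmetric. -/

import Mathlib

structure InsertionData (S R : Type) [CommRing S] [CommRing R] where
  res : S →+* R
  gys : R →+ S
  δ : R
  proj : ∀ (a : S) (x : R), gys (res a * x) = a * gys x
  comp : ∀ x : R, res (gys x) = δ * x

abbrev Hins (S R : Type) [CommRing S] [CommRing R] : Type :=
  S × ({i : ℤ // i ≠ 0} →₀ R)

noncomputable def wgt {R : Type} [CommRing R] (δ : R) (i j : ℤ) : R :=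
  if (i < 0 ∧ j < 0) ∨ (0 < i + j ∧ (i < 0 ∨ j < 0)) then δ else 1

noncomputable def mulH {S R : Type} [CommRing S] [CommRing R]
    (d : InsertionData S R) (x y : Hins S R) : Hins S R :=
  ( x.1 * y.1 + x.2.sum (fun i α => d.gys (α * y.2 ⟨-i.1, neg_ne_zero.mpr i.2⟩)),
    y.2.mapRange (fun β => d.res x.1 * β) (by simp)
    + x.2.mapRange (fun α => α * d.res y.1) (by simp)
    + x.2.sum (fun i α => y.2.sum (fun j β =>
        if h : i.1 + j.1 ≠ 0 then
          Finsupp.single ⟨i.1 + j.1, h⟩ (wgt d.δ i.1 j.1 * (α * β))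
        else 0)) )

/-- The pairing on `𝔥`: `([α]_i, [β]_j) = 0` for `i + j ≠ 0`, `([α]₀, [β]₀) = ∫_S αβ`,
and `([α]_i, [β]_{-i}) = ∫_R αβ` for `i ≠ 0`. -/
noncomputable def pairH {k S R : Type} [Field k] [CommRing S] [CommRing R]
    [Algebra k S] [Algebra k R] (intS : S →ₗ[k] k) (intR : R →ₗ[k] k)
    (x y : Hins S R) : k :=
  intS (x.1 * y.1) + x.2.sum (fun i α => intR (α * y.2 ⟨-i.1, neg_ne_zero.mpr i.2⟩))

/-- The weight in the trilinear form `A`: an extra `δ` appears exactly when two of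
the three contact orders `i, j, -(i+j)` are negative. -/
noncomputable def wgt3 {R : Type} [CommRing R] (δ : R) (i j : ℤ) : R :=
  if (i < 0 ∧ j < 0) ∨ (i < 0 ∧ -(i + j) < 0) ∨ (j < 0 ∧ -(i + j) < 0) then δ else 1

/-- The trilinear form `A` of the paper: `A([α]_i, [β]_j, [γ]_l) = 0` unless
`i + j + l = 0`; `∫_S αβγ` if `i = j = l = 0`; `∫_R` of the product (with any
degree-`0` entry restricted via `res`) if exactly one index is negative; and
`∫_R δ·(product)` if exactly two indices are negative. -/
noncomputable def triA {k S R : Type} [Field k] [CommRing S] [CommRing R]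
    [Algebra k S] [Algebra k R] (d : InsertionData S R)
    (intS : S →ₗ[k] k) (intR : R →ₗ[k] k) (x y z : Hins S R) : k :=
  intS (x.1 * y.1 * z.1)
  + y.2.sum (fun i β => intR (d.res x.1 * (β * z.2 ⟨-i.1, neg_ne_zero.mpr i.2⟩)))
  + x.2.sum (fun i α => intR (d.res y.1 * (α * z.2 ⟨-i.1, neg_ne_zero.mpr i.2⟩)))
  + x.2.sum (fun i α => intR (d.res z.1 * (α * y.2 ⟨-i.1, neg_ne_zero.mpr i.2⟩)))
  + x.2.sum (fun i α => y.2.sum (fun j β =>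
      if h : i.1 + j.1 ≠ 0 then
        intR (wgt3 d.δ i.1 j.1 * (α * β * z.2 ⟨-(i.1 + j.1), neg_ne_zero.mpr h⟩))
      else 0))

namespace IPI

abbrev I' : Type := {i : ℤ // i ≠ 0}

def negI (i : I') : I' := ⟨-i.1, neg_ne_zero.mpr i.2⟩

@[simp] lemma negI_negI (i : I') : negI (negI i) = i := by
  simp [negI]

lemma sum_swap_neg {R k : Type} [CommRing R] [AddCommMonoid k]
    (φ : R → R → k) (h0 : ∀ b, φ 0 b = 0)
    (hsymm : ∀ a b, φ a b = φ b a) (f g : I' →₀ R) :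
    f.sum (fun i α => φ α (g (negI i))) = g.sum (fun j β => φ β (f (negI j))) := by
  rw [Finsupp.sum, Finsupp.sum]
  have e1 : ∑ i ∈ f.support, φ (f i) (g (negI i))
      = ∑ i ∈ f.support ∪ g.support.image negI, φ (f i) (g (negI i)) :=
    Finset.sum_subset Finset.subset_union_left
      (fun i _ hi => by rw [Finsupp.notMem_support_iff.mp hi, h0])
  have e2 : ∑ j ∈ g.support, φ (g j) (f (negI j))
      = ∑ j ∈ g.support ∪ f.support.image negI, φ (g j) (f (negI j)) :=
    Finset.sum_subset Finset.subset_union_left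
      (fun i _ hi => by rw [Finsupp.notMem_support_iff.mp hi, h0])
  rw [e1, e2]
  refine Finset.sum_nbij' negI negI ?_ ?_ (fun a _ => negI_negI a) (fun a _ => negI_negI a) ?_
  · intro a ha
    rcases Finset.mem_union.mp ha with h | h
    · exact Finset.mem_union_right _ (Finset.mem_image_of_mem _ h)
    · rcases Finset.mem_image.mp h with ⟨b, hb, rfl⟩
      rw [negI_negI]; exact Finset.mem_union_left _ hb
  · intro a ha
    rcases Finset.mem_union.mp ha with h | h
    · exact Finset.mem_union_right _ (Finset.mem_image_of_mem _ h)
    · rcases Finset.mem_image.mp h with ⟨b, hb, rfl⟩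
      rw [negI_negI]; exact Finset.mem_union_left _ hb
  · intro a _
    rw [hsymm, negI_negI]

lemma wgt_eq_wgt3 {R : Type} [CommRing R] (δ : R) (i j : ℤ) : wgt δ i j = wgt3 δ i j := by
  unfold wgt wgt3
  exact if_congr (by omega) rfl rfl

lemma wgt3_comm {R : Type} [CommRing R] (δ : R) (i j : ℤ) : wgt3 δ i j = wgt3 δ j i := by
  unfold wgt3
  exact if_congr (by omega) rfl rfl

lemma wgt3_rot {R : Type} [CommRing R] (δ : R) (i j : ℤ) : wgt3 δ i (-(i + j)) = wgt3 δ i j := by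
  unfold wgt3
  exact if_congr (by omega) rfl rfl

variable {k S R : Type} [Field k] [CommRing S] [CommRing R] [Algebra k S] [Algebra k R]

/-- The "pair against `h`" additive map. -/
noncomputable def Qh (intR : R →ₗ[k] k) (h : I' →₀ R) : (I' →₀ R) →+ k where
  toFun F := F.sum (fun l γ => intR (γ * h (negI l)))
  map_zero' := Finsupp.sum_zero_index
  map_add' F G := by
    exact Finsupp.sum_add_index' (fun l => by simp) (fun l b₁ b₂ => by rw [add_mul, map_add])

lemma Qh_apply (intR : R →ₗ[k] k) (h F : I' →₀ R) :
    Qh intR h F = F.sum (fun l γ => intR (γ * h (negI l))) := by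
  simp only [Qh, AddMonoidHom.coe_mk, ZeroHom.coe_mk]

lemma Qh_single (intR : R →ₗ[k] k) (h : I' →₀ R) (l : I') (w : R) :
    Qh intR h (Finsupp.single l w) = intR (w * h (negI l)) := by
  rw [Qh_apply]
  exact Finsupp.sum_single_index (by simp)

lemma pairH_comm (intS : S →ₗ[k] k) (intR : R →ₗ[k] k) (x y : Hins S R) :
    pairH intS intR x y = pairH intS intR y x := by
  unfold pairH
  rw [mul_comm]
  congr 1
  exact sum_swap_neg (fun a b => intR (a * b)) (fun b => by simp)
    (fun a b => by rw [mul_comm]) x.2 y.2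

lemma pair_mul_eq_triA (d : InsertionData S R) (intS : S →ₗ[k] k) (intR : R →ₗ[k] k)
    (hint : ∀ x : R, intS (d.gys x) = intR x) (x y z : Hins S R) :
    pairH intS intR (mulH d x y) z = triA d intS intR x y z := by
  obtain ⟨a, f⟩ := x
  obtain ⟨b, g⟩ := y
  obtain ⟨c, h⟩ := z
  have hQ : ∀ F : I' →₀ R,
      F.sum (fun l γ => intR (γ * h ⟨-l.1, neg_ne_zero.mpr l.2⟩)) = Qh intR h F :=
    fun F => (Qh_apply intR h F).symm
  unfold pairH mulH triA
  dsimp only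
  rw [hQ, map_add, map_add, add_mul, map_add, Finsupp.sum_mul, map_finsuppSum]
  have h4 : (f.sum fun i α => intS (d.gys (α * g ⟨-i.1, neg_ne_zero.mpr i.2⟩) * c))
      = f.sum fun i α => intR (d.res c * (α * g ⟨-i.1, neg_ne_zero.mpr i.2⟩)) :=
    Finsupp.sum_congr fun i _ => by rw [mul_comm, ← d.proj, hint]
  have h1 : Qh intR h (g.mapRange (fun β => d.res a * β) (by simp))
      = g.sum fun i β => intR (d.res a * (β * h ⟨-i.1, neg_ne_zero.mpr i.2⟩)) := by
    rw [Qh_apply, Finsupp.sum_mapRange_index (fun l => by simp)]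
    exact Finsupp.sum_congr fun j _ => congrArg _ (by simp only [negI]; ring)
  have h2 : Qh intR h (f.mapRange (fun α => α * d.res b) (by simp))
      = f.sum fun i α => intR (d.res b * (α * h ⟨-i.1, neg_ne_zero.mpr i.2⟩)) := by
    rw [Qh_apply, Finsupp.sum_mapRange_index (fun l => by simp)]
    exact Finsupp.sum_congr fun i _ => congrArg _ (by simp only [negI]; ring)
  have h3 : Qh intR h (f.sum fun i α => g.sum fun j β =>
        if hij : i.1 + j.1 ≠ 0 then
          Finsupp.single ⟨i.1 + j.1, hij⟩ (wgt d.δ i.1 j.1 * (α * β))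
        else 0)
      = f.sum fun i α => g.sum fun j β =>
          if hij : i.1 + j.1 ≠ 0 then
            intR (wgt3 d.δ i.1 j.1 * (α * β * h ⟨-(i.1 + j.1), neg_ne_zero.mpr hij⟩))
          else 0 := by
    rw [map_finsuppSum]
    refine Finsupp.sum_congr fun i _ => ?_
    rw [map_finsuppSum]
    refine Finsupp.sum_congr fun j _ => ?_
    by_cases hij : i.1 + j.1 ≠ 0
    · rw [dif_pos hij, dif_pos hij, Qh_single, wgt_eq_wgt3, mul_assoc]
      simp only [negI]
    · rw [dif_neg hij, dif_neg hij, map_zero]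
  rw [h1, h2, h3, h4]
  ring

lemma inner_reflect (intR : R →ₗ[k] k) (δ α : R) (i : I') (g h : I' →₀ R) :
    (g.sum fun j β => if hj : i.1 + j.1 ≠ 0 then
        intR (wgt3 δ i.1 j.1 * (α * β * h ⟨-(i.1 + j.1), neg_ne_zero.mpr hj⟩)) else 0)
    = h.sum fun j γ => if hj : i.1 + j.1 ≠ 0 then
        intR (wgt3 δ i.1 j.1 * (α * γ * g ⟨-(i.1 + j.1), neg_ne_zero.mpr hj⟩)) else 0 := by
  classical
  rw [Finsupp.sum, Finsupp.sum]
  have hD : ∀ u v : I' →₀ R,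
      (∑ j ∈ u.support, (if hj : i.1 + j.1 ≠ 0 then
        intR (wgt3 δ i.1 j.1 * (α * u j * v ⟨-(i.1 + j.1), neg_ne_zero.mpr hj⟩)) else 0))
      = ∑ j ∈ u.support.filter
          (fun j => i.1 + j.1 ≠ 0 ∧ -(i.1 + j.1) ∈ v.support.image Subtype.val),
          (if hj : i.1 + j.1 ≠ 0 then
        intR (wgt3 δ i.1 j.1 * (α * u j * v ⟨-(i.1 + j.1), neg_ne_zero.mpr hj⟩)) else 0) := by
    intro u v
    refine (Finset.sum_subset (Finset.filter_subset _ _) ?_).symm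
    intro j hj hnot
    by_cases h0 : i.1 + j.1 ≠ 0
    · have hv : v ⟨-(i.1 + j.1), neg_ne_zero.mpr h0⟩ = 0 := by
        by_contra hne
        exact hnot (Finset.mem_filter.mpr ⟨hj, h0,
          Finset.mem_image.mpr ⟨⟨-(i.1 + j.1), neg_ne_zero.mpr h0⟩,
            Finsupp.mem_support_iff.mpr hne, rfl⟩⟩)
      rw [dif_pos h0, hv]
      simp
    · rw [dif_neg h0]
  rw [hD g h, hD h g]
  set e : I' → I' := fun j => if hj : i.1 + j.1 = 0 then j else ⟨-(i.1 + j.1), neg_ne_zero.mpr hj⟩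
    with he
  have hmem : ∀ u v : I' →₀ R, ∀ j ∈ u.support.filter
      (fun j => i.1 + j.1 ≠ 0 ∧ -(i.1 + j.1) ∈ v.support.image Subtype.val),
      e j ∈ v.support.filter
      (fun j => i.1 + j.1 ≠ 0 ∧ -(i.1 + j.1) ∈ u.support.image Subtype.val) := by
    intro u v j hj
    obtain ⟨hju, hj0, hjv⟩ := Finset.mem_filter.mp hj
    obtain ⟨hj0, hjv⟩ := And.intro hj0 hjv
    have hej : e j = ⟨-(i.1 + j.1), neg_ne_zero.mpr hj0⟩ := dif_neg hj0
    obtain ⟨t, ht, htv⟩ := Finset.mem_image.mp hjv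
    have : t = ⟨-(i.1 + j.1), neg_ne_zero.mpr hj0⟩ := Subtype.ext htv
    refine Finset.mem_filter.mpr ⟨by rw [hej, ← this]; exact ht, ?_, ?_⟩
    · rw [hej]; exact fun hc => j.2 (by dsimp at hc; omega)
    · rw [hej]
      refine Finset.mem_image.mpr ⟨j, hju, ?_⟩
      dsimp; omega
  have hinv : ∀ j : I', i.1 + j.1 ≠ 0 → e (e j) = j := by
    intro j hj0
    have hej : e j = ⟨-(i.1 + j.1), neg_ne_zero.mpr hj0⟩ := dif_neg hj0
    rw [he]
    dsimp only
    rw [dif_neg hj0, dif_neg (by dsimp; intro hc; exact j.2 (by omega))]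
    exact Subtype.ext (by dsimp; omega)
  refine Finset.sum_nbij' e e (hmem g h) (hmem h g) ?_ ?_ ?_
  · intro j hj
    exact hinv j (Finset.mem_filter.mp hj).2.1
  · intro j hj
    exact hinv j (Finset.mem_filter.mp hj).2.1
  · intro j hj
    obtain ⟨hju, hj0, hjv⟩ := Finset.mem_filter.mp hj
    have hej : e j = ⟨-(i.1 + j.1), neg_ne_zero.mpr hj0⟩ := dif_neg hj0
    have h2 : i.1 + (e j).1 ≠ 0 := by rw [hej]; dsimp; intro hc; exact j.2 (by omega)
    rw [dif_pos hj0, dif_pos h2]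
    have hval : (e j).1 = -(i.1 + j.1) := congrArg Subtype.val hej
    have hidx : (⟨-(i.1 + (e j).1), neg_ne_zero.mpr h2⟩ : I') = j := by
      refine Subtype.ext ?_
      show -(i.1 + (e j).1) = j.1
      rw [hval]; omega
    have hw : wgt3 δ i.1 (e j).1 = wgt3 δ i.1 j.1 := by
      rw [hej]; exact wgt3_rot δ i.1 j.1
    rw [hidx, hw]
    refine congrArg _ ?_
    have : h (e j) = h ⟨-(i.1 + j.1), neg_ne_zero.mpr hj0⟩ := by rw [hej]
    rw [this]; ring

lemma triA_comm12 (d : InsertionData S R) (intS : S →ₗ[k] k) (intR : R →ₗ[k] k)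
    (x y z : Hins S R) :
    triA d intS intR x y z = triA d intS intR y x z := by
  obtain ⟨a, f⟩ := x
  obtain ⟨b, g⟩ := y
  obtain ⟨c, h⟩ := z
  unfold triA
  dsimp only
  have e1 : intS (a * b * c) = intS (b * a * c) := congrArg _ (by ring)
  have e4 : (f.sum fun i α => intR (d.res c * (α * g ⟨-i.1, neg_ne_zero.mpr i.2⟩)))
      = g.sum fun j β => intR (d.res c * (β * f ⟨-j.1, neg_ne_zero.mpr j.2⟩)) :=
    sum_swap_neg (fun u v => intR (d.res c * (u * v))) (fun v => by simp)
      (fun u v => by rw [mul_comm u v]) f g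
  have eD : (f.sum fun i α => g.sum fun j β =>
        if hij : i.1 + j.1 ≠ 0 then
          intR (wgt3 d.δ i.1 j.1 * (α * β * h ⟨-(i.1 + j.1), neg_ne_zero.mpr hij⟩))
        else 0)
      = g.sum fun j β => f.sum fun i α =>
        if hij : j.1 + i.1 ≠ 0 then
          intR (wgt3 d.δ j.1 i.1 * (β * α * h ⟨-(j.1 + i.1), neg_ne_zero.mpr hij⟩))
        else 0 := by
    rw [Finsupp.sum_comm]
    refine Finsupp.sum_congr fun j _ => Finsupp.sum_congr fun i _ => ?_
    by_cases hij : i.1 + j.1 = 0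
    · rw [dif_neg (by omega), dif_neg (by omega)]
    · have hji : j.1 + i.1 ≠ 0 := by omega
      rw [dif_pos hij, dif_pos hji]
      have hx : (⟨-(j.1 + i.1), neg_ne_zero.mpr hji⟩ : I')
          = ⟨-(i.1 + j.1), neg_ne_zero.mpr hij⟩ := Subtype.ext (by dsimp; ring)
      rw [hx, wgt3_comm d.δ j.1 i.1]
      exact congrArg _ (by ring)
  rw [e1, e4, eD]
  ring

lemma triA_comm23 (d : InsertionData S R) (intS : S →ₗ[k] k) (intR : R →ₗ[k] k)
    (x y z : Hins S R) :
    triA d intS intR x y z = triA d intS intR x z y := by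
  obtain ⟨a, f⟩ := x
  obtain ⟨b, g⟩ := y
  obtain ⟨c, h⟩ := z
  unfold triA
  dsimp only
  have e1 : intS (a * b * c) = intS (a * c * b) := congrArg _ (by ring)
  have e2 : (g.sum fun i β => intR (d.res a * (β * h ⟨-i.1, neg_ne_zero.mpr i.2⟩)))
      = h.sum fun j γ => intR (d.res a * (γ * g ⟨-j.1, neg_ne_zero.mpr j.2⟩)) :=
    sum_swap_neg (fun u v => intR (d.res a * (u * v))) (fun v => by simp)
      (fun u v => by rw [mul_comm u v]) g h
  have eD : (f.sum fun i α => g.sum fun j β =>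
        if hij : i.1 + j.1 ≠ 0 then
          intR (wgt3 d.δ i.1 j.1 * (α * β * h ⟨-(i.1 + j.1), neg_ne_zero.mpr hij⟩))
        else 0)
      = f.sum fun i α => h.sum fun j γ =>
        if hij : i.1 + j.1 ≠ 0 then
          intR (wgt3 d.δ i.1 j.1 * (α * γ * g ⟨-(i.1 + j.1), neg_ne_zero.mpr hij⟩))
        else 0 :=
    Finsupp.sum_congr fun i _ => inner_reflect intR d.δ (f i) i g h
  rw [e1, e2, eD]
  ring

end IPI

open IPI in
/-- The pairing on `𝔥` is invariant for the insertion product: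
`(x·y, z) = (x, y·z)`, and `(x·y, z)` equals the totally symmetric trilinear
form `A(x, y, z)`. Here `∫_S ∘ gys = ∫_R`. -/

theorem insertion_pairing_invariant {k S R : Type} [Field k] [CommRing S] [CommRing R]
    [Algebra k S] [Algebra k R] (d : InsertionData S R)
    (intS : S →ₗ[k] k) (intR : R →ₗ[k] k)
    (hint : ∀ x : R, intS (d.gys x) = intR x) :
    (∀ x y z : Hins S R,
        pairH intS intR (mulH d x y) z = triA d intS intR x y z) ∧
    (∀ x y z : Hins S R, triA d intS intR x y z = triA d intS intR y x z) ∧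
    (∀ x y z : Hins S R, triA d intS intR x y z = triA d intS intR x z y) ∧
    (∀ x y z : Hins S R,
        pairH intS intR (mulH d x y) z = pairH intS intR x (mulH d y z)) := by
  refine ⟨pair_mul_eq_triA d intS intR hint, triA_comm12 d intS intR,
    triA_comm23 d intS intR, fun x y z => ?_⟩
  rw [pair_mul_eq_triA d intS intR hint, pairH_comm, pair_mul_eq_triA d intS intR hint,
    triA_comm12, triA_comm23]
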